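/- Let m be a non-negative integer and let τ, z₁, z₂, t ∈ ℂ with Im τ > 0, z₁ ∉ ℤ + ℤτ and z₂ ∉ ℤ + ℤτ, and set q = e^{2πiτ}. Then Φ^{[m]}(τ, z₁, z₂, t) − e^{2πi(m+1)z₁} Φ^{[m]}(τ, z₁, z₂+τ, t) = Σ_{j=0}^{m−1} e^{πi(j+1)(z₁−z₂)} q^{−(j+1)²/(4(m+1))} ( Θ_{j+1,m+1}(τ, z₁+z₂, t) − Θ_{−(j+1),m+1}(τ, z₁+z₂, t) ). -/

import Mathlib

open Complex MeasureTheory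

namespace KW

local notation "π" => (Real.pi : ℂ)

/-- The lattice `ℤ + ℤτ`. -/
def InLattice (τ z : ℂ) : Prop := ∃ a b : ℤ, z = (a : ℂ) + (b : ℂ) * τ

/-- The mock theta function `Φ^[m]` of Kac–Wakimoto. -/
noncomputable def Phi (m : ℕ) (τ z₁ z₂ t : ℂ) : ℂ :=
  exp (2 * π * I * ((m : ℂ) + 1) * t) *
    ∑' j : ℤ,
      (exp (2 * π * I * (j : ℂ) * ((m : ℂ) + 1) * (z₁ + z₂)) *
            exp (2 * π * I * τ * (((m : ℂ) + 1) * (j : ℂ) ^ 2)) /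
          (1 - exp (2 * π * I * z₁) * exp (2 * π * I * τ * (j : ℂ))) -
        exp (-(2 * π * I * (j : ℂ) * ((m : ℂ) + 1) * (z₁ + z₂))) *
            exp (2 * π * I * τ * (((m : ℂ) + 1) * (j : ℂ) ^ 2)) /
          (1 - exp (-(2 * π * I * z₂)) * exp (2 * π * I * τ * (j : ℂ))))

/-- The degree-`k` theta function `Θ_{j,k}(τ,z,t)`. -/
noncomputable def Theta (j : ℤ) (k : ℕ) (τ z t : ℂ) : ℂ :=
  exp (2 * π * I * (k : ℂ) * t) *
    ∑' n : ℤ,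
      exp (2 * π * I * τ * (k : ℂ) * ((j : ℂ) / (2 * (k : ℂ)) + (n : ℂ)) ^ 2) *
        exp (2 * π * I * (k : ℂ) * ((j : ℂ) / (2 * (k : ℂ)) + (n : ℂ)) * z)

/-! ### Auxiliary definitions -/

noncomputable def Aterm (m : ℕ) (τ z₁ z₂ : ℂ) (j : ℤ) : ℂ :=
  exp (2 * π * I * (j : ℂ) * ((m : ℂ) + 1) * (z₁ + z₂)) *
      exp (2 * π * I * τ * (((m : ℂ) + 1) * (j : ℂ) ^ 2)) /
    (1 - exp (2 * π * I * z₁) * exp (2 * π * I * τ * (j : ℂ)))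

noncomputable def Bterm (m : ℕ) (τ z₁ z₂ : ℂ) (j : ℤ) : ℂ :=
  exp (-(2 * π * I * (j : ℂ) * ((m : ℂ) + 1) * (z₁ + z₂))) *
      exp (2 * π * I * τ * (((m : ℂ) + 1) * (j : ℂ) ^ 2)) /
    (1 - exp (-(2 * π * I * z₂)) * exp (2 * π * I * τ * (j : ℂ)))

noncomputable def fA (m : ℕ) (τ z₁ z₂ : ℂ) (r : ℕ) (j : ℤ) : ℂ :=
  exp (2 * π * I * (j : ℂ) * ((m : ℂ) + 1) * (z₁ + z₂)) *
    exp (2 * π * I * τ * (((m : ℂ) + 1) * (j : ℂ) ^ 2 + (r : ℂ) * (j : ℂ))) *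
    exp (2 * π * I * (r : ℂ) * z₁)

noncomputable def fB (m : ℕ) (τ z₁ z₂ : ℂ) (r : ℕ) (j : ℤ) : ℂ :=
  exp (-(2 * π * I * (j : ℂ) * ((m : ℂ) + 1) * (z₁ + z₂))) *
    exp (2 * π * I * τ * (((m : ℂ) + 1) * (j : ℂ) ^ 2 + (r : ℂ) * (j : ℂ))) *
    exp (-(2 * π * I * (r : ℂ) * z₂))

lemma Phi_eq (m : ℕ) (τ z₁ z₂ t : ℂ) :
    Phi m τ z₁ z₂ t = exp (2 * π * I * ((m : ℂ) + 1) * t) *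
      ∑' j : ℤ, (Aterm m τ z₁ z₂ j - Bterm m τ z₁ z₂ j) := rfl

/-! ### Non-vanishing of denominators -/

lemma denom_ne {τ z : ℂ} (h : ¬ InLattice τ z) (j : ℤ) :
    exp (2 * π * I * z) * exp (2 * π * I * τ * (j : ℂ)) ≠ 1 := by
  intro hc
  rw [← Complex.exp_add] at hc
  obtain ⟨n, hn⟩ := Complex.exp_eq_one_iff.mp hc
  apply h
  refine ⟨n, -j, ?_⟩
  have h2 : (2 * π * I) ≠ 0 := by
    simp [Real.pi_ne_zero, Complex.I_ne_zero, Complex.ofReal_ne_zero]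
  have key : (2 * π * I) * z = (2 * π * I) * ((n : ℂ) + ((-j : ℤ) : ℂ) * τ) := by
    push_cast
    linear_combination hn
  exact mul_left_cancel₀ h2 key

/-! ### Lower bound for denominators -/

lemma norm_dq {τ : ℂ} (d : ℂ) (j : ℤ) :
    ‖d * exp (2 * π * I * τ * (j : ℂ))‖ = ‖d‖ * Real.exp (-(2 * Real.pi * τ.im) * (j : ℝ)) := by
  rw [norm_mul, Complex.norm_exp]
  congr 2
  simp [Complex.mul_re, Complex.mul_im]

lemma denom_lb {τ : ℂ} (hτ : 0 < τ.im) (d : ℂ)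
    (hd : ∀ j : ℤ, d * exp (2 * π * I * τ * (j : ℂ)) ≠ 1) :
    ∃ δ : ℝ, 0 < δ ∧ ∀ j : ℤ, δ ≤ ‖1 - d * exp (2 * π * I * τ * (j : ℂ))‖ := by
  rcases eq_or_ne d 0 with rfl | hd0
  · exact ⟨1, one_pos, fun j => by simp⟩
  have hdn : 0 < ‖d‖ := norm_pos_iff.mpr hd0
  set c : ℝ := 2 * Real.pi * τ.im with hc
  have hcpos : 0 < c := by positivity
  have harg : Filter.Tendsto (fun n : ℕ => c * (n : ℝ)) Filter.atTop Filter.atTop :=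
    Filter.Tendsto.const_mul_atTop hcpos tendsto_natCast_atTop_atTop
  have htend : Filter.Tendsto (fun n : ℕ => Real.exp (c * n)) Filter.atTop Filter.atTop :=
    Real.tendsto_exp_atTop.comp harg
  obtain ⟨N, hN⟩ := (htend.eventually_ge_atTop (max (2 * ‖d‖) (2 / ‖d‖))).exists
  have hN1 : 2 * ‖d‖ ≤ Real.exp (c * N) := le_trans (le_max_left _ _) hN
  have hN2 : 2 / ‖d‖ ≤ Real.exp (c * N) := le_trans (le_max_right _ _) hN
  have hne : (Finset.Icc (-(N : ℤ)) (N : ℤ)).Nonempty := ⟨0, by simp⟩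
  set δ₀ : ℝ := (Finset.Icc (-(N : ℤ)) (N : ℤ)).inf' hne
      (fun j => ‖1 - d * exp (2 * π * I * τ * (j : ℂ))‖) with hδ₀
  have hδ₀pos : 0 < δ₀ := by
    rw [hδ₀, Finset.lt_inf'_iff]
    intro j _
    rw [norm_pos_iff]
    exact sub_ne_zero.mpr (fun h => hd j h.symm)
  refine ⟨min δ₀ (1/2), lt_min hδ₀pos (by norm_num), fun j => ?_⟩
  rcases le_or_gt j (N : ℤ) with hj1 | hj1
  · rcases le_or_gt (-(N : ℤ)) j with hj2 | hj2
    · exact le_trans (min_le_left _ _)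
        (Finset.inf'_le _ (Finset.mem_Icc.mpr ⟨hj2, hj1⟩))
    · have hnorm : 2 ≤ ‖d * exp (2 * π * I * τ * (j : ℂ))‖ := by
        rw [norm_dq]
        have hj3 : (N : ℝ) ≤ -(j : ℝ) := by
          have : (j : ℝ) < -(N : ℝ) := by exact_mod_cast hj2
          linarith
        have : Real.exp (c * N) ≤ Real.exp (-(c) * (j : ℝ)) := by
          apply Real.exp_le_exp.mpr
          rw [neg_mul, ← mul_neg] at *
          exact mul_le_mul_of_nonneg_left hj3 hcpos.le
        have h4 : 2 / ‖d‖ ≤ Real.exp (-(2 * Real.pi * τ.im) * (j : ℝ)) := by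
          calc 2 / ‖d‖ ≤ Real.exp (c * N) := hN2
          _ ≤ _ := by rw [hc] at this ⊢; linarith [this]
        exact (div_le_iff₀' hdn).mp h4
      calc min δ₀ (1/2) ≤ 1/2 := min_le_right _ _
      _ ≤ ‖d * exp (2 * π * I * τ * (j : ℂ))‖ - ‖(1:ℂ)‖ := by
            have h1 : ‖(1:ℂ)‖ = 1 := norm_one; linarith
      _ ≤ ‖1 - d * exp (2 * π * I * τ * (j : ℂ))‖ := by
            rw [norm_sub_rev]
            exact le_trans (sub_le_sub_right (le_refl _) _) (norm_sub_norm_le _ _)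
  · have hnorm : ‖d * exp (2 * π * I * τ * (j : ℂ))‖ ≤ 1/2 := by
      rw [norm_dq]
      have hj3 : (N : ℝ) ≤ (j : ℝ) := by exact_mod_cast hj1.le
      have hmono : Real.exp (-(2 * Real.pi * τ.im) * (j : ℝ)) ≤ Real.exp (-(c * N)) := by
        apply Real.exp_le_exp.mpr
        rw [hc]
        nlinarith
      have h4 : ‖d‖ * Real.exp (-(c * N)) ≤ 1/2 := by
        rw [Real.exp_neg, mul_inv_le_iff₀ (Real.exp_pos _)]
        linarith
      calc ‖d‖ * Real.exp (-(2 * Real.pi * τ.im) * (j : ℝ))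
          ≤ ‖d‖ * Real.exp (-(c * N)) := mul_le_mul_of_nonneg_left hmono hdn.le
      _ ≤ 1/2 := h4
    calc min δ₀ (1/2) ≤ 1/2 := min_le_right _ _
    _ ≤ ‖(1:ℂ)‖ - ‖d * exp (2 * π * I * τ * (j : ℂ))‖ := by
          have h1 : ‖(1:ℂ)‖ = 1 := norm_one; linarith
    _ ≤ ‖1 - d * exp (2 * π * I * τ * (j : ℂ))‖ := norm_sub_norm_le _ _

/-! ### Summability -/

lemma summable_num {τ : ℂ} (hτ : 0 < τ.im) (k : ℕ) (w b : ℂ) :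
    Summable fun j : ℤ =>
      exp (2 * π * I * (j : ℂ) * w) *
        exp (2 * π * I * τ * (((k : ℂ) + 1) * (j : ℂ) ^ 2 + b * (j : ℂ))) := by
  have him : 0 < (2 * ((k : ℂ) + 1) * τ).im := by
    have h : (2 * ((k : ℂ) + 1) * τ) = ((2 * ((k : ℝ) + 1) : ℝ) : ℂ) * τ := by push_cast; ring
    rw [h, Complex.im_ofReal_mul]
    positivity
  have hs := (summable_jacobiTheta₂_term_iff (w + τ * b) (2 * ((k : ℂ) + 1) * τ)).mpr him
  apply hs.congr
  intro j
  rw [jacobiTheta₂_term, ← Complex.exp_add]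
  exact congrArg _ (by ring)

lemma summable_main {τ : ℂ} (hτ : 0 < τ.im) (k : ℕ) (w b d : ℂ)
    (hd : ∀ j : ℤ, d * exp (2 * π * I * τ * (j : ℂ)) ≠ 1) :
    Summable fun j : ℤ =>
      exp (2 * π * I * (j : ℂ) * w) *
          exp (2 * π * I * τ * (((k : ℂ) + 1) * (j : ℂ) ^ 2 + b * (j : ℂ))) /
        (1 - d * exp (2 * π * I * τ * (j : ℂ))) := by
  obtain ⟨δ, hδ, hbd⟩ := denom_lb hτ d hd
  have hnum := summable_num hτ k w b
  apply Summable.of_norm_bounded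
    (g := fun j : ℤ => ‖exp (2 * π * I * (j : ℂ) * w) *
      exp (2 * π * I * τ * (((k : ℂ) + 1) * (j : ℂ) ^ 2 + b * (j : ℂ)))‖ * δ⁻¹)
    ((summable_norm_iff.mpr hnum).mul_right δ⁻¹)
  intro j
  rw [norm_div, div_eq_mul_inv]
  have h1 : ‖1 - d * exp (2 * π * I * τ * (j : ℂ))‖⁻¹ ≤ δ⁻¹ := inv_anti₀ hδ (hbd j)
  exact mul_le_mul_of_nonneg_left h1 (norm_nonneg _)

/-! ### helpers for exponential rearrangement -/

lemma expm {a b a' b' : ℂ} (c : ℂ) (h : a + b = a' + b') :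
    exp a * exp b / c = exp a' * exp b' / c := by
  rw [← Complex.exp_add, ← Complex.exp_add, h]

section Instances

variable {m : ℕ} {τ z₁ z₂ : ℂ}

lemma lat_neg (h : ¬ InLattice τ z₂) : ¬ InLattice τ (-z₂) := by
  rintro ⟨a, b, hab⟩
  exact h ⟨-a, -b, by push_cast; linear_combination -hab⟩

lemma lat_neg' (h : ¬ InLattice τ z₂) : ¬ InLattice τ (-(z₂ + τ)) := by
  rintro ⟨a, b, hab⟩
  exact h ⟨-a, -b - 1, by push_cast; linear_combination -hab⟩

lemma hd₂_of (h : ¬ InLattice τ z₂) (j : ℤ) :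
    exp (-(2 * π * I * z₂)) * exp (2 * π * I * τ * (j : ℂ)) ≠ 1 := by
  have := denom_ne (lat_neg h) j
  rwa [show (2 * π * I * (-z₂)) = -(2 * π * I * z₂) from by ring] at this

lemma hd₂'_of (h : ¬ InLattice τ z₂) (j : ℤ) :
    exp (-(2 * π * I * (z₂ + τ))) * exp (2 * π * I * τ * (j : ℂ)) ≠ 1 := by
  have := denom_ne (lat_neg' h) j
  rwa [show (2 * π * I * (-(z₂ + τ))) = -(2 * π * I * (z₂ + τ)) from by ring] at this

lemma sumA (hτ : 0 < τ.im) (h₁ : ¬ InLattice τ z₁) :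
    Summable (Aterm m τ z₁ z₂) :=
  (summable_main hτ m (((m : ℂ) + 1) * (z₁ + z₂)) 0 _ (denom_ne h₁)).congr
    (fun j => expm _ (by ring))

lemma sumB (hτ : 0 < τ.im) (h₂ : ¬ InLattice τ z₂) :
    Summable (Bterm m τ z₁ z₂) :=
  (summable_main hτ m (-(((m : ℂ) + 1) * (z₁ + z₂))) 0 _ (hd₂_of h₂)).congr
    (fun j => expm _ (by ring))

lemma sumA2 (hτ : 0 < τ.im) (h₁ : ¬ InLattice τ z₁) :
    Summable (Aterm m τ z₁ (z₂ + τ)) :=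
  (summable_main hτ m (((m : ℂ) + 1) * (z₁ + z₂)) ((m : ℂ) + 1) _ (denom_ne h₁)).congr
    (fun j => expm _ (by ring))

lemma sumB2 (hτ : 0 < τ.im) (h₂ : ¬ InLattice τ z₂) :
    Summable (Bterm m τ z₁ (z₂ + τ)) :=
  (summable_main hτ m (-(((m : ℂ) + 1) * (z₁ + z₂))) (-((m : ℂ) + 1)) _ (hd₂'_of h₂)).congr
    (fun j => expm _ (by ring))

lemma expm3 {a b c a' b' c' : ℂ} (h : a + b + c = a' + b' + c') :
    exp a * exp b * exp c = exp a' * exp b' * exp c' := by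
  rw [← Complex.exp_add, ← Complex.exp_add, ← Complex.exp_add, ← Complex.exp_add, h]

lemma sumfA (hτ : 0 < τ.im) (r : ℕ) : Summable (fA m τ z₁ z₂ r) :=
  ((summable_num hτ m (((m : ℂ) + 1) * (z₁ + z₂)) (r : ℂ)).mul_right
    (exp (2 * π * I * (r : ℂ) * z₁))).congr (fun j => expm3 (by ring))

lemma sumfB (hτ : 0 < τ.im) (r : ℕ) : Summable (fB m τ z₁ z₂ r) :=
  ((summable_num hτ m (-(((m : ℂ) + 1) * (z₁ + z₂))) (r : ℂ)).mul_right
    (exp (-(2 * π * I * (r : ℂ) * z₂)))).congr (fun j => expm3 (by ring))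

end Instances

/-! ### Geometric splitting -/

lemma geom_split (n : ℕ) {x : ℂ} (hx : x ≠ 1) (u : ℂ) :
    u / (1 - x) - u * x ^ (n + 1) / (1 - x) = ∑ r ∈ Finset.range (n + 1), u * x ^ r := by
  have hne : (1 : ℂ) - x ≠ 0 := sub_ne_zero.mpr (Ne.symm hx)
  have hg : (∑ r ∈ Finset.range (n + 1), x ^ r) * (1 - x) = 1 - x ^ (n + 1) := by
    linear_combination (-1 : ℂ) * geom_sum_mul x (n + 1)
  rw [← Finset.mul_sum, div_sub_div_same, eq_comm, mul_comm u]
  rw [eq_div_iff hne]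
  linear_combination u * hg

lemma ptA {m : ℕ} {τ z₁ z₂ : ℂ} (h₁ : ¬ InLattice τ z₁) (j : ℤ) :
    Aterm m τ z₁ z₂ j - exp (2 * π * I * ((m : ℂ) + 1) * z₁) * Aterm m τ z₁ (z₂ + τ) j =
      ∑ r ∈ Finset.range (m + 1), fA m τ z₁ z₂ r j := by
  have hx : (exp (2 * π * I * z₁) * exp (2 * π * I * τ * (j : ℂ))) ≠ 1 := denom_ne h₁ j
  unfold Aterm
  set x := exp (2 * π * I * z₁) * exp (2 * π * I * τ * (j : ℂ)) with hxd
  have hxp : ∀ r : ℕ, x ^ r = exp ((r : ℂ) * (2 * π * I * z₁)) *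
      exp ((r : ℂ) * (2 * π * I * τ * (j : ℂ))) := by
    intro r
    rw [hxd, mul_pow, ← Complex.exp_nat_mul, ← Complex.exp_nat_mul]
  have hnum : exp (2 * π * I * ((m : ℂ) + 1) * z₁) *
        (exp (2 * π * I * (j : ℂ) * ((m : ℂ) + 1) * (z₁ + (z₂ + τ))) *
          exp (2 * π * I * τ * (((m : ℂ) + 1) * (j : ℂ) ^ 2))) =
      exp (2 * π * I * (j : ℂ) * ((m : ℂ) + 1) * (z₁ + z₂)) *
          exp (2 * π * I * τ * (((m : ℂ) + 1) * (j : ℂ) ^ 2)) * x ^ (m + 1) := by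
    rw [hxp (m + 1)]
    simp only [← Complex.exp_add]
    exact congrArg _ (by push_cast; ring)
  have h2 : exp (2 * π * I * ((m : ℂ) + 1) * z₁) *
        (exp (2 * π * I * (j : ℂ) * ((m : ℂ) + 1) * (z₁ + (z₂ + τ))) *
          exp (2 * π * I * τ * (((m : ℂ) + 1) * (j : ℂ) ^ 2)) / (1 - x)) =
      exp (2 * π * I * (j : ℂ) * ((m : ℂ) + 1) * (z₁ + z₂)) *
          exp (2 * π * I * τ * (((m : ℂ) + 1) * (j : ℂ) ^ 2)) * x ^ (m + 1) / (1 - x) := by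
    rw [mul_div_assoc', hnum]
  rw [h2, geom_split m hx]
  refine Finset.sum_congr rfl fun r _ => ?_
  rw [hxp r]
  unfold fA
  simp only [← Complex.exp_add]
  exact congrArg _ (by push_cast; ring)

lemma ptB {m : ℕ} {τ z₁ z₂ : ℂ} (h₂ : ¬ InLattice τ z₂) (j : ℤ) :
    Bterm m τ z₁ z₂ j - exp (2 * π * I * ((m : ℂ) + 1) * z₁) * Bterm m τ z₁ (z₂ + τ) (j + 1) =
      ∑ r ∈ Finset.range (m + 1), fB m τ z₁ z₂ r j := by
  have hy : (exp (-(2 * π * I * z₂)) * exp (2 * π * I * τ * (j : ℂ))) ≠ 1 := hd₂_of h₂ j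
  unfold Bterm
  have hden : exp (-(2 * π * I * (z₂ + τ))) * exp (2 * π * I * τ * ((j + 1 : ℤ) : ℂ)) =
      exp (-(2 * π * I * z₂)) * exp (2 * π * I * τ * (j : ℂ)) := by
    rw [← Complex.exp_add, ← Complex.exp_add]
    exact congrArg _ (by push_cast; ring)
  rw [hden]
  set y := exp (-(2 * π * I * z₂)) * exp (2 * π * I * τ * (j : ℂ)) with hyd
  have hyp : ∀ r : ℕ, y ^ r = exp ((r : ℂ) * (-(2 * π * I * z₂))) *
      exp ((r : ℂ) * (2 * π * I * τ * (j : ℂ))) := by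
    intro r
    rw [hyd, mul_pow, ← Complex.exp_nat_mul, ← Complex.exp_nat_mul]
  have hnum : exp (2 * π * I * ((m : ℂ) + 1) * z₁) *
        (exp (-(2 * π * I * ((j + 1 : ℤ) : ℂ) * ((m : ℂ) + 1) * (z₁ + (z₂ + τ)))) *
          exp (2 * π * I * τ * (((m : ℂ) + 1) * ((j + 1 : ℤ) : ℂ) ^ 2))) =
      exp (-(2 * π * I * (j : ℂ) * ((m : ℂ) + 1) * (z₁ + z₂))) *
          exp (2 * π * I * τ * (((m : ℂ) + 1) * (j : ℂ) ^ 2)) * y ^ (m + 1) := by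
    rw [hyp (m + 1)]
    simp only [← Complex.exp_add]
    exact congrArg _ (by push_cast; ring)
  have h2 : exp (2 * π * I * ((m : ℂ) + 1) * z₁) *
        (exp (-(2 * π * I * ((j + 1 : ℤ) : ℂ) * ((m : ℂ) + 1) * (z₁ + (z₂ + τ)))) *
          exp (2 * π * I * τ * (((m : ℂ) + 1) * ((j + 1 : ℤ) : ℂ) ^ 2)) / (1 - y)) =
      exp (-(2 * π * I * (j : ℂ) * ((m : ℂ) + 1) * (z₁ + z₂))) *
          exp (2 * π * I * τ * (((m : ℂ) + 1) * (j : ℂ) ^ 2)) * y ^ (m + 1) / (1 - y) := by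
    rw [mul_div_assoc', hnum]
  rw [h2, geom_split m hy]
  refine Finset.sum_congr rfl fun r _ => ?_
  rw [hyp r]
  unfold fB
  simp only [← Complex.exp_add]
  exact congrArg _ (by push_cast; ring)

lemma f0 (m : ℕ) (τ z₁ z₂ : ℂ) :
    (∑' j : ℤ, fA m τ z₁ z₂ 0 j) = ∑' j : ℤ, fB m τ z₁ z₂ 0 j := by
  rw [← (Equiv.neg ℤ).tsum_eq (fB m τ z₁ z₂ 0)]
  refine tsum_congr fun j => ?_
  simp only [Equiv.neg_apply]
  unfold fA fB
  simp only [← Complex.exp_add]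
  exact congrArg _ (by push_cast; ring)

/-! ### Theta identities -/

lemma castM (m : ℕ) : ((m : ℂ) + 1) ≠ 0 := by
  have h : ((m : ℂ) + 1) = ((m + 1 : ℕ) : ℂ) := by push_cast; ring
  rw [h]
  exact_mod_cast Nat.succ_ne_zero m

lemma thA (m : ℕ) (τ z₁ z₂ t : ℂ) (r : ℕ) :
    exp (π * I * ((r : ℂ) + 1) * (z₁ - z₂)) *
        exp (-(2 * π * I * τ * (((r : ℂ) + 1) ^ 2 / (4 * ((m : ℂ) + 1))))) *
        Theta ((r : ℤ) + 1) (m + 1) τ (z₁ + z₂) t =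
      exp (2 * π * I * ((m : ℂ) + 1) * t) * ∑' j : ℤ, fA m τ z₁ z₂ (r + 1) j := by
  have hM := castM m
  unfold Theta
  have hT : exp (2 * π * I * ((m + 1 : ℕ) : ℂ) * t) = exp (2 * π * I * ((m : ℂ) + 1) * t) :=
    congrArg _ (by push_cast; ring)
  rw [hT, mul_left_comm]
  conv_lhs => rw [← tsum_mul_left]
  congr 1
  refine tsum_congr fun n => ?_
  unfold fA
  simp only [← Complex.exp_add]
  refine congrArg _ ?_
  push_cast
  field_simp
  ring

lemma thB (m : ℕ) (τ z₁ z₂ t : ℂ) (r : ℕ) :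
    exp (π * I * ((r : ℂ) + 1) * (z₁ - z₂)) *
        exp (-(2 * π * I * τ * (((r : ℂ) + 1) ^ 2 / (4 * ((m : ℂ) + 1))))) *
        Theta (-((r : ℤ) + 1)) (m + 1) τ (z₁ + z₂) t =
      exp (2 * π * I * ((m : ℂ) + 1) * t) * ∑' j : ℤ, fB m τ z₁ z₂ (r + 1) j := by
  have hM := castM m
  unfold Theta
  have hT : exp (2 * π * I * ((m + 1 : ℕ) : ℂ) * t) = exp (2 * π * I * ((m : ℂ) + 1) * t) :=
    congrArg _ (by push_cast; ring)
  rw [hT, mul_left_comm]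
  conv_lhs => rw [← tsum_mul_left]
  congr 1
  rw [← (Equiv.neg ℤ).tsum_eq (fB m τ z₁ z₂ (r + 1))]
  refine tsum_congr fun n => ?_
  simp only [Equiv.neg_apply]
  unfold fB
  simp only [← Complex.exp_add]
  refine congrArg _ ?_
  push_cast
  field_simp
  ring

/-- Lemma 5.1(e) of Kac–Wakimoto. -/
theorem statement1 (m : ℕ) (τ z₁ z₂ t : ℂ) (hτ : 0 < τ.im)
    (h₁ : ¬ InLattice τ z₁) (h₂ : ¬ InLattice τ z₂) :
    Phi m τ z₁ z₂ t - exp (2 * π * I * ((m : ℂ) + 1) * z₁) * Phi m τ z₁ (z₂ + τ) t =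
      ∑ j ∈ Finset.range m,
        exp (π * I * ((j : ℂ) + 1) * (z₁ - z₂)) *
          exp (-(2 * π * I * τ * (((j : ℂ) + 1) ^ 2 / (4 * ((m : ℂ) + 1))))) *
          (Theta ((j : ℤ) + 1) (m + 1) τ (z₁ + z₂) t -
            Theta (-((j : ℤ) + 1)) (m + 1) τ (z₁ + z₂) t) := by
  have sA : Summable (Aterm m τ z₁ z₂) := sumA hτ h₁
  have sB : Summable (Bterm m τ z₁ z₂) := sumB hτ h₂
  have sA2 : Summable (Aterm m τ z₁ (z₂ + τ)) := sumA2 hτ h₁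
  have sB2 : Summable (Bterm m τ z₁ (z₂ + τ)) := sumB2 hτ h₂
  have hkey : (∑' j : ℤ, (Aterm m τ z₁ z₂ j - Bterm m τ z₁ z₂ j)) -
      exp (2 * π * I * ((m : ℂ) + 1) * z₁) *
        ∑' j : ℤ, (Aterm m τ z₁ (z₂ + τ) j - Bterm m τ z₁ (z₂ + τ) j) =
      ∑ r ∈ Finset.range (m + 1),
        ((∑' j : ℤ, fA m τ z₁ z₂ r j) - ∑' j : ℤ, fB m τ z₁ z₂ r j) := by
    rw [Summable.tsum_sub sA sB, Summable.tsum_sub sA2 sB2, mul_sub, ← tsum_mul_left, ← tsum_mul_left]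
    have hshift : (∑' j : ℤ, exp (2 * π * I * ((m : ℂ) + 1) * z₁) * Bterm m τ z₁ (z₂ + τ) j) =
        ∑' j : ℤ, exp (2 * π * I * ((m : ℂ) + 1) * z₁) * Bterm m τ z₁ (z₂ + τ) (j + 1) := by
      have h := (Equiv.addRight (1 : ℤ)).tsum_eq
        (fun j => exp (2 * π * I * ((m : ℂ) + 1) * z₁) * Bterm m τ z₁ (z₂ + τ) j)
      simp only [Equiv.coe_addRight] at h
      exact h.symm
    rw [hshift]
    have hsum2 : Summable (fun j : ℤ =>
        exp (2 * π * I * ((m : ℂ) + 1) * z₁) * Bterm m τ z₁ (z₂ + τ) (j + 1)) := by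
      have h := (Equiv.addRight (1 : ℤ)).summable_iff.mpr
        (sB2.mul_left (exp (2 * π * I * ((m : ℂ) + 1) * z₁)))
      simpa [Function.comp_def, Equiv.coe_addRight] using h
    have hrearr : ∀ a b a2 b2 : ℂ, a - b - (a2 - b2) = (a - a2) - (b - b2) :=
      fun _ _ _ _ => by ring
    rw [hrearr, ← Summable.tsum_sub sA (sA2.mul_left _), ← Summable.tsum_sub sB hsum2,
      tsum_congr (fun j => ptA (z₂ := z₂) h₁ j), tsum_congr (fun j => ptB (z₁ := z₁) h₂ j),
      Summable.tsum_finsetSum (fun r _ => sumfA hτ r), Summable.tsum_finsetSum (fun r _ => sumfB hτ r),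
      ← Finset.sum_sub_distrib]
  have expand : ∀ S1 S2 : ℂ,
      exp (2 * π * I * ((m : ℂ) + 1) * t) * S1 -
        exp (2 * π * I * ((m : ℂ) + 1) * z₁) * (exp (2 * π * I * ((m : ℂ) + 1) * t) * S2) =
      exp (2 * π * I * ((m : ℂ) + 1) * t) *
        (S1 - exp (2 * π * I * ((m : ℂ) + 1) * z₁) * S2) := fun _ _ => by ring
  rw [Phi_eq, Phi_eq, expand, hkey, Finset.sum_range_succ', f0 m τ z₁ z₂, sub_self, add_zero,
    Finset.mul_sum]
  refine Finset.sum_congr rfl fun r _ => ?_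
  rw [mul_sub, mul_sub, thA m τ z₁ z₂ t r, thB m τ z₁ z₂ t r]


end KW
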